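/- arXiv:1303.1337 — 3 statements merged into one kernel-verified Lean document; each statement's English description precedes it below -/
import Mathlib

section
/- Let (X, μ) be a measure space with finite measure μ, let φ : X → (0, ∞) be measurable, and let 1 < α < ∞. Then the infimum of ∫_X φ·ρ^α dμ over all nonnegative measurable functions ρ : X → [0, ∞] with ∫_X ρ dμ = 1 equals (∫_X φ^{1/(1-α)} dμ)^{1-α}. -/
open MeasureTheory
open scoped ENNReal

theorem stmt_0 {X : Type*} [MeasurableSpace X] (μ : Measure X) [IsFiniteMeasure μ]
    (φ : X → ℝ≥0∞) (hφm : Measurable φ) (hφpos : ∀ x, 0 < φ x) (hφtop : ∀ x, φ x ≠ ∞)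
    (α : ℝ) (hα : 1 < α)
    (hIpos : 0 < ∫⁻ x, φ x ^ (1 / (1 - α)) ∂μ)
    (hIfin : ∫⁻ x, φ x ^ (1 / (1 - α)) ∂μ ≠ ∞) :
    sInf {I : ℝ≥0∞ | ∃ ρ : X → ℝ≥0∞, Measurable ρ ∧ (∫⁻ x, ρ x ∂μ) = 1 ∧
        I = ∫⁻ x, φ x * ρ x ^ α ∂μ} =
      (∫⁻ x, φ x ^ (1 / (1 - α)) ∂μ) ^ (1 - α) := by
  set β : ℝ := 1 / (1 - α) with hβ
  set I : ℝ≥0∞ := ∫⁻ x, φ x ^ β ∂μ with hI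
  have hI0 : I ≠ 0 := hIpos.ne'
  have hα0 : (0 : ℝ) < α := lt_trans one_pos hα
  have hαne : α - 1 ≠ 0 := by linarith
  have h1α : (1 : ℝ) - α ≠ 0 := by linarith
  have hφ0 : ∀ x, φ x ≠ 0 := fun x => (hφpos x).ne'
  apply le_antisymm
  · -- upper bound: use ρ = φ^β / I
    apply sInf_le
    refine ⟨fun x => φ x ^ β * I⁻¹, (hφm.pow_const β).mul_const _, ?_, ?_⟩
    · rw [lintegral_mul_const _ (hφm.pow_const β), ← hI, ENNReal.mul_inv_cancel hI0 hIfin]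
    · have hpt : ∀ x, φ x * (φ x ^ β * I⁻¹) ^ α = φ x ^ β * I⁻¹ ^ α := by
        intro x
        rw [ENNReal.mul_rpow_of_nonneg _ _ hα0.le, ← ENNReal.rpow_mul, ← mul_assoc]
        congr 1
        nth_rewrite 1 [← ENNReal.rpow_one (φ x)]
        rw [← ENNReal.rpow_add _ _ (hφ0 x) (hφtop x)]
        congr 1
        rw [hβ]
        field_simp
        ring
      have hA : (∫⁻ x, φ x * (φ x ^ β * I⁻¹) ^ α ∂μ) = I * I⁻¹ ^ α := by
        simp only [hpt]
        rw [lintegral_mul_const _ (hφm.pow_const β), ← hI]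
      rw [hA, ENNReal.inv_rpow, ← ENNReal.rpow_neg,
        show I * I ^ (-α) = I ^ (1 + -α) by
          rw [ENNReal.rpow_add _ _ hI0 hIfin, ENNReal.rpow_one]]
      congr 1
  · -- lower bound via Hölder
    rw [le_sInf_iff]
    rintro A ⟨ρ, hρm, hρ1, rfl⟩
    have hq : Real.HolderConjugate α (α / (α - 1)) := Real.HolderConjugate.conjExponent hα
    have key := ENNReal.lintegral_mul_le_Lp_mul_Lq μ hq
      (f := fun x => φ x ^ (1/α) * ρ x) (g := fun x => φ x ^ (-(1/α)))
      ((hφm.pow_const _).mul hρm).aemeasurable (hφm.pow_const _).aemeasurable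
    simp only [Pi.mul_apply] at key
    have hfg : ∀ x, φ x ^ (1/α) * ρ x * φ x ^ (-(1/α)) = ρ x := by
      intro x
      rw [mul_comm (φ x ^ (1/α)) (ρ x), mul_assoc,
        ← ENNReal.rpow_add _ _ (hφ0 x) (hφtop x)]
      simp
    have hf : ∀ x, ((φ x ^ (1/α) * ρ x) ^ α) = φ x * ρ x ^ α := by
      intro x
      rw [ENNReal.mul_rpow_of_nonneg _ _ hα0.le, ← ENNReal.rpow_mul,
        one_div, inv_mul_cancel₀ hα0.ne', ENNReal.rpow_one]
    have hg : ∀ x, ((φ x ^ (-(1/α))) ^ (α / (α - 1))) = φ x ^ β := by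
      intro x
      rw [← ENNReal.rpow_mul]
      congr 1
      rw [hβ]
      field_simp
      ring
    simp only [hfg, hf, hg] at key
    rw [hρ1, ← hI] at key
    -- key : 1 ≤ A^(1/α) * I^(1/(α/(α-1)))
    set A := ∫⁻ x, φ x * ρ x ^ α ∂μ
    have hIq : I ^ (1 / (α / (α - 1))) ≠ 0 := (ENNReal.rpow_pos hIpos hIfin).ne'
    have hIqt : I ^ (1 / (α / (α - 1))) ≠ ∞ :=
      ENNReal.rpow_ne_top_of_nonneg hq.symm.one_div_nonneg hIfin
    have h2 : (I ^ (1 / (α / (α - 1))))⁻¹ ≤ A ^ (1/α) := by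
      have h := mul_le_mul_left key (I ^ (1 / (α / (α - 1))))⁻¹
      rwa [one_mul, mul_assoc, ENNReal.mul_inv_cancel hIq hIqt, mul_one] at h
    have h3 : ((I ^ (1 / (α / (α - 1))))⁻¹) ^ α ≤ (A ^ (1/α)) ^ α :=
      ENNReal.rpow_le_rpow h2 hα0.le
    rw [← ENNReal.rpow_mul, one_div_mul_cancel hα0.ne', ENNReal.rpow_one] at h3
    refine le_trans (le_of_eq ?_) h3
    rw [ENNReal.inv_rpow, ← ENNReal.rpow_neg, ← ENNReal.rpow_mul]
    congr 1
    field_simp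
    ring
end

section
/- Let μ be a finite measure on X and φ : X → (0, ∞) measurable with ∫_X φ^{1/(1−α)} dμ = ∞ for some α ∈ (1, ∞). Then the infimum of ∫_X φ ρ^α dμ over all nonnegative measurable ρ with ∫_X ρ dμ = 1 equals 0. -/
open MeasureTheory
open scoped ENNReal

private lemma rpow_le_rpow_neg {x y : ℝ≥0∞} {z : ℝ} (h : x ≤ y) (hz : z ≤ 0) :
    y ^ z ≤ x ^ z := by
  rw [← neg_neg z, ENNReal.rpow_neg x, ENNReal.rpow_neg y, ENNReal.inv_le_inv]
  exact ENNReal.rpow_le_rpow h (by linarith)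

private lemma rpow_lt_rpow_neg {x y : ℝ≥0∞} {z : ℝ} (h : x < y) (hz : z < 0) :
    y ^ z < x ^ z := by
  rw [← neg_neg z, ENNReal.rpow_neg x, ENNReal.rpow_neg y, ENNReal.inv_lt_inv]
  exact ENNReal.rpow_lt_rpow h (by linarith)

theorem stmt_8 {X : Type*} [MeasurableSpace X] (μ : Measure X) [IsFiniteMeasure μ]
    (φ : X → ℝ≥0∞) (hφm : Measurable φ) (hφpos : ∀ x, 0 < φ x) (hφtop : ∀ x, φ x ≠ ∞)
    (α : ℝ) (hα : 1 < α)
    (hdiv : (∫⁻ x, φ x ^ (1 / (1 - α)) ∂μ) = ∞) :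
    sInf {I : ℝ≥0∞ | ∃ ρ : X → ℝ≥0∞, Measurable ρ ∧ (∫⁻ x, ρ x ∂μ) = 1 ∧
        I = ∫⁻ x, φ x * ρ x ^ α ∂μ} = 0 := by
  set β : ℝ := 1 / (1 - α) with hβ
  have hαβ : (1 : ℝ) - α ≠ 0 := by linarith
  have hβneg : β < 0 := by
    rw [hβ]
    apply div_neg_of_pos_of_neg one_pos
    linarith
  set g : X → ℝ≥0∞ := fun x => φ x ^ β with hg
  have hgm : Measurable g := hφm.pow_const β
  have hβ1 : β * (1 - α) = 1 := by rw [hβ]; field_simp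
  have hβ2 : 1 + β * α = β := by rw [hβ]; field_simp; ring
  have hg0 : ∀ x, g x ≠ 0 := by
    intro x h
    rcases ENNReal.rpow_eq_zero_iff.mp h with ⟨h1, _⟩ | ⟨h1, _⟩
    · exact (hφpos x).ne' h1
    · exact hφtop x h1
  have hgtop : ∀ x, g x ≠ ∞ := by
    intro x h
    rcases ENNReal.rpow_eq_top_iff.mp h with ⟨h1, _⟩ | ⟨h1, _⟩
    · exact (hφpos x).ne' h1
    · exact hφtop x h1
  set f : ℕ → X → ℝ≥0∞ := fun n x => min (g x) n with hf
  have hfm : ∀ n, Measurable (f n) := fun n => hgm.min measurable_const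
  have hfmono : Monotone f := by
    intro m n hmn x
    exact min_le_min le_rfl (by exact_mod_cast Nat.cast_le.2 hmn)
  set c : ℕ → ℝ≥0∞ := fun n => ∫⁻ x, f n x ∂μ with hc
  have hcsup : ⨆ n, c n = ∞ := by
    rw [hc]
    rw [← lintegral_iSup hfm hfmono]
    rw [← hdiv]
    congr 1
    funext x
    apply le_antisymm
    · exact iSup_le fun n => min_le_left _ _
    · obtain ⟨n, hn⟩ := ENNReal.exists_nat_gt (hgtop x)
      calc g x = min (g x) n := (min_eq_left hn.le).symm
        _ ≤ ⨆ n, f n x := le_iSup (fun n => f n x) n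
  have hctop : ∀ n, c n ≠ ∞ := by
    intro n
    have : c n ≤ (n : ℝ≥0∞) * μ Set.univ := by
      rw [hc]
      calc ∫⁻ x, f n x ∂μ ≤ ∫⁻ _, (n : ℝ≥0∞) ∂μ := lintegral_mono fun x => min_le_right _ _
        _ = (n : ℝ≥0∞) * μ Set.univ := lintegral_const n
    exact ne_top_of_le_ne_top (ENNReal.mul_ne_top (ENNReal.natCast_ne_top n)
      (measure_ne_top μ _)) this
  have hμ : μ Set.univ ≠ 0 := by
    intro h
    rw [Measure.measure_univ_eq_zero.mp h] at hdiv
    simp at hdiv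
  have hfpos : ∀ n, 1 ≤ n → ∀ x, 0 < f n x := by
    intro n hn x
    rw [hf]
    simp only [lt_min_iff]
    refine ⟨(hg0 x).bot_lt, ?_⟩
    exact_mod_cast lt_of_lt_of_le zero_lt_one (by exact_mod_cast Nat.one_le_cast.2 hn)
  have hc0 : ∀ n, 1 ≤ n → c n ≠ 0 := by
    intro n hn h
    rw [hc, lintegral_eq_zero_iff (hfm n)] at h
    have : μ Set.univ = 0 := by
      have h2 := h
      rw [Filter.EventuallyEq, ae_iff] at h2
      convert h2 using 2
      ext x
      simp [(hfpos n hn x).ne']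
    exact hμ this
  -- key pointwise bound
  have hkey : ∀ n, 1 ≤ n → ∀ x, φ x * f n x ^ α ≤ f n x := by
    intro n hn x
    have ha0 : φ x ≠ 0 := (hφpos x).ne'
    have hat : φ x ≠ ∞ := hφtop x
    have hn0 : (n : ℝ≥0∞) ≠ 0 := by exact_mod_cast Nat.pos_of_ne_zero (by omega) |>.ne'
    have hnt : (n : ℝ≥0∞) ≠ ∞ := ENNReal.natCast_ne_top n
    rcases le_total (g x) (n : ℝ≥0∞) with h | h
    · rw [hf]; simp only [min_eq_left h]
      rw [hg]
      apply le_of_eq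
      calc φ x * (φ x ^ β) ^ α = φ x ^ (1 : ℝ) * φ x ^ (β * α) := by
            rw [← ENNReal.rpow_mul, ENNReal.rpow_one]
        _ = φ x ^ (1 + β * α) := (ENNReal.rpow_add _ _ ha0 hat).symm
        _ = φ x ^ β := by rw [hβ2]
    · have hmin : f n x = (n : ℝ≥0∞) := min_eq_right h
      rw [hmin]
      have hφeq : φ x = (g x) ^ (1 - α) := by
        rw [hg, ← ENNReal.rpow_mul, hβ1]
        exact (ENNReal.rpow_one _).symm
      have h1 : φ x ≤ (n : ℝ≥0∞) ^ (1 - α) := by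
        rw [hφeq]
        exact rpow_le_rpow_neg h (by linarith)
      calc φ x * (n : ℝ≥0∞) ^ α ≤ (n : ℝ≥0∞) ^ (1 - α) * (n : ℝ≥0∞) ^ α :=
            mul_le_mul_left h1 _
        _ = (n : ℝ≥0∞) := by
            rw [← ENNReal.rpow_add _ _ hn0 hnt]
            norm_num
  -- each c n ^ (1-α) bounds an element of the set
  have hmem : ∀ n, 1 ≤ n → ∃ I ∈ {I : ℝ≥0∞ | ∃ ρ : X → ℝ≥0∞, Measurable ρ ∧
      (∫⁻ x, ρ x ∂μ) = 1 ∧ I = ∫⁻ x, φ x * ρ x ^ α ∂μ}, I ≤ c n ^ (1 - α) := by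
    intro n hn
    set ρ : X → ℝ≥0∞ := fun x => f n x * (c n)⁻¹ with hρ
    have hρm : Measurable ρ := (hfm n).mul measurable_const
    have hρint : (∫⁻ x, ρ x ∂μ) = 1 := by
      rw [hρ]
      simp only
      rw [lintegral_mul_const _ (hfm n)]
      exact ENNReal.mul_inv_cancel (hc0 n hn) (hctop n)
    refine ⟨∫⁻ x, φ x * ρ x ^ α ∂μ, ⟨ρ, hρm, hρint, rfl⟩, ?_⟩
    have hrw : ∀ x, φ x * ρ x ^ α = (φ x * f n x ^ α) * ((c n)⁻¹) ^ α := by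
      intro x
      rw [hρ]
      simp only
      rw [ENNReal.mul_rpow_of_nonneg _ _ (by linarith : (0:ℝ) ≤ α)]
      ring
    calc (∫⁻ x, φ x * ρ x ^ α ∂μ) = ∫⁻ x, (φ x * f n x ^ α) * ((c n)⁻¹) ^ α ∂μ := by
          simp_rw [hrw]
      _ = (∫⁻ x, φ x * f n x ^ α ∂μ) * ((c n)⁻¹) ^ α := by
          rw [lintegral_mul_const (f := fun x => φ x * f n x ^ α) _ (hφm.mul ((hfm n).pow_const α))]
      _ ≤ (∫⁻ x, f n x ∂μ) * ((c n)⁻¹) ^ α := by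
          gcongr with x
          exact hkey n hn x
      _ = c n * c n ^ (-α) := by rw [ENNReal.inv_rpow, ← ENNReal.rpow_neg]
      _ = c n ^ (1 - α) := by
          have h1 : c n * c n ^ (-α) = c n ^ (1 + -α) := by
            rw [ENNReal.rpow_add _ _ (hc0 n hn) (hctop n), ENNReal.rpow_one]
          rw [h1]
          congr 1
  -- conclude
  rw [show (0 : ℝ≥0∞) = ⊥ from rfl, sInf_eq_bot]
  intro ε hε
  set M : ℝ≥0∞ := max 1 (ε ^ β) with hM
  have hMtop : M ≠ ∞ := by
    rw [hM, ne_eq, max_eq_top]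
    rintro (h | h)
    · exact ENNReal.one_ne_top h
    · rcases ENNReal.rpow_eq_top_iff.mp h with ⟨h1, _⟩ | ⟨_, h2⟩
      · exact hε.ne' h1
      · linarith
  obtain ⟨m, hm⟩ := (lt_iSup_iff).mp (hMtop.lt_top.trans_eq hcsup.symm)
  set n := max m 1 with hn
  have hn1 : 1 ≤ n := le_max_right _ _
  have hcn : M < c n := lt_of_lt_of_le hm (by
    apply lintegral_mono
    exact fun x => hfmono (le_max_left m 1) x)
  obtain ⟨I, hI, hIle⟩ := hmem n hn1
  refine ⟨I, hI, ?_⟩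
  have hstep : c n ^ (1 - α) < M ^ (1 - α) := rpow_lt_rpow_neg hcn (by linarith)
  have hMε : M ^ (1 - α) ≤ ε := by
    rcases eq_or_ne ε ∞ with rfl | hεt
    · exact le_top
    · calc M ^ (1 - α) ≤ (ε ^ β) ^ (1 - α) :=
            rpow_le_rpow_neg (le_max_right _ _) (by linarith)
        _ = ε ^ (β * (1 - α)) := (ENNReal.rpow_mul ε β (1 - α)).symm
        _ = ε := by rw [hβ1]; exact ENNReal.rpow_one ε
  exact lt_of_le_of_lt hIle (lt_of_lt_of_le hstep hMε)
end

section
/- For real numbers 0 < r₁ < r₂ and a measurable function q : (r₁, r₂) → (0, ∞), every Lebesgue measurable η : (r₁, r₂) → [0, ∞] with ∫_{r₁}^{r₂} η(r) dr ≥ 1 satisfies ∫_{r₁}^{r₂} q(r) η(r)ⁿ · r^{n−1} ω_{n−1} dr ≥ ω_{n−1} / I^{n−1}, where I = ∫_{r₁}^{r₂} dr / (r · q(r)^{1/(n−1)}), provided I ∈ (0, ∞). -/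
open MeasureTheory
open scoped ENNReal

theorem stmt_9 {n : ℕ} (hn : 2 ≤ n) (r₁ r₂ : ℝ) (hr₁ : 0 < r₁) (hr : r₁ < r₂)
    (ω : ℝ≥0∞) (hωpos : 0 < ω) (hωfin : ω ≠ ∞)
    (q : ℝ → ℝ≥0∞) (hqm : Measurable q) (hqpos : ∀ r, 0 < q r) (hqtop : ∀ r, q r ≠ ∞)
    (I : ℝ≥0∞)
    (hI : I = ∫⁻ r in Set.Ioo r₁ r₂,
      (ENNReal.ofReal r * q r ^ (1 / ((n : ℝ) - 1)))⁻¹)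
    (hIpos : 0 < I) (hIfin : I ≠ ∞)
    (η : ℝ → ℝ≥0∞) (hηm : Measurable η)
    (hadm : 1 ≤ ∫⁻ r in Set.Ioo r₁ r₂, η r) :
    ω / I ^ ((n : ℝ) - 1) ≤
      ∫⁻ r in Set.Ioo r₁ r₂,
        q r * η r ^ (n : ℝ) * ENNReal.ofReal (r ^ ((n : ℝ) - 1)) * ω := by
  have hn2 : (2:ℝ) ≤ (n:ℝ) := by exact_mod_cast hn
  have hn1pos : (0:ℝ) < (n:ℝ) - 1 := by linarith
  have hnpos : (0:ℝ) < (n:ℝ) := by linarith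
  set μ := (volume : Measure ℝ).restrict (Set.Ioo r₁ r₂) with hμ
  set B : ℝ → ℝ≥0∞ := fun r => q r * ENNReal.ofReal (r ^ ((n:ℝ) - 1)) with hBdef
  set f : ℝ → ℝ≥0∞ := fun r => B r ^ ((n:ℝ)⁻¹) * η r with hfdef
  set g : ℝ → ℝ≥0∞ := fun r => B r ^ (-(n:ℝ)⁻¹) with hgdef
  have hBm : Measurable B :=
    hqm.mul (ENNReal.measurable_ofReal.comp (measurable_id.pow_const _))
  have hfm : Measurable f := (hBm.pow_const _).mul hηm
  have hgm : Measurable g := hBm.pow_const _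
  -- conjugate exponents
  have hpq : Real.HolderConjugate (n:ℝ) ((n:ℝ)/((n:ℝ)-1)) := by
    refine Real.holderConjugate_iff.mpr ⟨?_, ?_⟩
    · linarith
    · field_simp; ring
  -- pointwise facts on Ioo
  have hBpos : ∀ r ∈ Set.Ioo r₁ r₂, B r ≠ 0 ∧ B r ≠ ∞ := by
    intro r hrm
    have hr0 : 0 < r := hr₁.trans hrm.1
    have h1 : (0:ℝ) < r ^ ((n:ℝ) - 1) := Real.rpow_pos_of_pos hr0 _
    constructor
    · exact mul_ne_zero (hqpos r).ne' (by simpa using h1)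
    · exact ENNReal.mul_ne_top (hqtop r) ENNReal.ofReal_ne_top
  have hfg : ∀ r ∈ Set.Ioo r₁ r₂, (f * g) r = η r := by
    intro r hrm
    obtain ⟨h0, htop⟩ := hBpos r hrm
    simp only [Pi.mul_apply, hfdef, hgdef]
    rw [mul_right_comm, ← ENNReal.rpow_add _ _ h0 htop]
    simp
  have hfp : ∀ r, f r ^ (n:ℝ) = B r * η r ^ (n:ℝ) := by
    intro r
    rw [hfdef]
    rw [ENNReal.mul_rpow_of_nonneg _ _ hnpos.le, ← ENNReal.rpow_mul,
      inv_mul_cancel₀ hnpos.ne', ENNReal.rpow_one]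
  have hgq : ∀ r ∈ Set.Ioo r₁ r₂,
      g r ^ ((n:ℝ)/((n:ℝ)-1)) = (ENNReal.ofReal r * q r ^ (1 / ((n : ℝ) - 1)))⁻¹ := by
    intro r hrm
    have hr0 : 0 < r := hr₁.trans hrm.1
    have h1 : (0:ℝ) < r ^ ((n:ℝ) - 1) := Real.rpow_pos_of_pos hr0 _
    have he : -(n:ℝ)⁻¹ * ((n:ℝ)/((n:ℝ)-1)) = -(1 / ((n:ℝ)-1)) := by
      field_simp
    rw [hgdef, ← ENNReal.rpow_mul, he, ENNReal.rpow_neg, hBdef]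
    congr 1
    rw [ENNReal.mul_rpow_of_nonneg _ _ (by positivity : (0:ℝ) ≤ 1 / ((n:ℝ)-1)),
      ENNReal.ofReal_rpow_of_pos h1, ← Real.rpow_mul hr0.le,
      mul_one_div, div_self hn1pos.ne', Real.rpow_one, mul_comm]
  -- Hölder
  have holder := ENNReal.lintegral_mul_le_Lp_mul_Lq μ hpq hfm.aemeasurable hgm.aemeasurable
  set J : ℝ≥0∞ := ∫⁻ r in Set.Ioo r₁ r₂, B r * η r ^ (n:ℝ) with hJdef
  have hIeq : (∫⁻ a, g a ^ ((n:ℝ)/((n:ℝ)-1)) ∂μ) = I := by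
    rw [hI, hμ]
    exact setLIntegral_congr_fun measurableSet_Ioo hgq
  have hfgint : (∫⁻ a, (f * g) a ∂μ) = ∫⁻ r in Set.Ioo r₁ r₂, η r := by
    rw [hμ]
    exact setLIntegral_congr_fun measurableSet_Ioo hfg
  have hJeq : (∫⁻ a, f a ^ (n:ℝ) ∂μ) = J := by
    rw [hJdef, hμ]
    exact lintegral_congr fun r => hfp r
  rw [hfgint, hIeq, hJeq] at holder
  have h1 : (1:ℝ≥0∞) ≤ J ^ ((n:ℝ)⁻¹) * I ^ (((n:ℝ)-1)/(n:ℝ)) := by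
    rw [show (1:ℝ)/((n:ℝ)/((n:ℝ)-1)) = ((n:ℝ)-1)/(n:ℝ) by rw [one_div, inv_div],
      one_div] at holder
    exact le_trans hadm holder
  -- raise to power n
  have h2 : (1:ℝ≥0∞) ≤ J * I ^ ((n:ℝ)-1) := by
    have := ENNReal.rpow_le_rpow h1 hnpos.le
    rw [ENNReal.one_rpow, ENNReal.mul_rpow_of_nonneg _ _ hnpos.le,
      ← ENNReal.rpow_mul, ← ENNReal.rpow_mul, inv_mul_cancel₀ hnpos.ne',
      div_mul_cancel₀ _ hnpos.ne', ENNReal.rpow_one] at this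
    exact this
  -- conclusion
  have hIe0 : I ^ ((n:ℝ)-1) ≠ 0 := by
    simp [ENNReal.rpow_eq_zero_iff, hIpos.ne', hIfin, hn1pos, hn1pos.not_gt]
  have hIet : I ^ ((n:ℝ)-1) ≠ ∞ := ENNReal.rpow_ne_top_of_nonneg hn1pos.le hIfin
  have hgoal : (∫⁻ r in Set.Ioo r₁ r₂,
      q r * η r ^ (n : ℝ) * ENNReal.ofReal (r ^ ((n : ℝ) - 1)) * ω) = J * ω := by
    calc (∫⁻ r in Set.Ioo r₁ r₂,
          q r * η r ^ (n : ℝ) * ENNReal.ofReal (r ^ ((n : ℝ) - 1)) * ω)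
        = ∫⁻ r in Set.Ioo r₁ r₂, (B r * η r ^ (n:ℝ)) * ω := by
          refine lintegral_congr fun r => ?_
          rw [hBdef]; ring
      _ = J * ω := lintegral_mul_const _ (hBm.mul (hηm.pow_const _))
  rw [hgoal]
  rw [ENNReal.div_le_iff_le_mul (Or.inl hIe0) (Or.inl hIet)]
  calc ω = 1 * ω := (one_mul ω).symm
    _ ≤ (J * I ^ ((n:ℝ)-1)) * ω := mul_le_mul_left h2 ω
    _ = J * ω * I ^ ((n:ℝ)-1) := by ring
end
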